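/- arXiv:1811.10715 — 4 statements merged into one kernel-verified Lean document; each statement's English description precedes it below -/
import Mathlib

section
/- Let U ⊆ ℂ be an open set and γ : [0,1] → ℂ a continuously differentiable curve whose image is contained in U. Then there exists a constant M ≥ 0 such that for every function f : ℂ → ℂ holomorphic on U with ∫_U |f|² dA < ∞, one has |∫_0^1 f(γ(t))·γ'(t) dt| ≤ M · (∫_U |f|² dA)^{1/2}. -/
open MeasureTheory Metric Complex intervalIntegral

open scoped Real

lemma circle_avg_le {f : ℂ → ℂ} {c : ℂ} {s : ℝ} (hs : 0 < s)
    (hf : DifferentiableOn ℂ f (closedBall c s)) :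
    2 * π * ‖f c‖ ≤ ∫ θ in Set.Ioo (-π) π, ‖f (circleMap c s θ)‖ := by
  have hC := hf.circleIntegral_sub_inv_smul (mem_ball_self hs)
  have hne : ∀ θ : ℝ, circleMap 0 s θ ≠ 0 := by
    intro θ h
    have := norm_circleMap_zero s θ
    rw [h] at this
    simp [abs_of_pos hs] at this
    exact hs.ne' this.symm
  have h1 : (∮ z in C(c, s), (z - c)⁻¹ • f z)
      = ∫ θ in (0:ℝ)..(2*π), I * f (circleMap c s θ) := by
    rw [circleIntegral]
    congr 1
    funext θ
    rw [deriv_circleMap, circleMap_sub_center, smul_eq_mul, smul_eq_mul]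
    field_simp [hne θ]
  rw [h1] at hC
  rw [intervalIntegral.integral_const_mul] at hC
  have h2 : (∫ θ in (0:ℝ)..(2*π), f (circleMap c s θ)) = (2 * π : ℝ) * f c := by
    apply mul_left_cancel₀ Complex.I_ne_zero
    rw [hC, smul_eq_mul]
    push_cast
    ring
  have h3 : 2 * π * ‖f c‖
      ≤ ∫ θ in (0:ℝ)..(2*π), ‖f (circleMap c s θ)‖ := by
    have hb := intervalIntegral.norm_integral_le_integral_norm (μ := volume)
      (f := fun θ => f (circleMap c s θ)) (a := (0:ℝ)) (b := 2*π) (by positivity)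
    rw [h2] at hb
    calc 2 * π * ‖f c‖ = ‖(2*π:ℝ) * f c‖ := by
          rw [norm_mul, Complex.norm_real, Real.norm_eq_abs, abs_of_pos Real.two_pi_pos]
      _ ≤ _ := hb
  have hper : Function.Periodic (fun θ => ‖f (circleMap c s θ)‖) (2*π) :=
    (periodic_circleMap c s).comp fun z => ‖f z‖
  have h4 := hper.intervalIntegral_add_eq 0 (-π)
  simp only [zero_add] at h4
  have hpi : -π + 2*π = π := by ring
  rw [hpi] at h4
  rw [h4] at h3
  rwa [intervalIntegral.integral_of_le (by linarith [Real.pi_pos]),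
    MeasureTheory.integral_Ioc_eq_integral_Ioo] at h3

lemma submean {f : ℂ → ℂ} {c : ℂ} {r : ℝ} (hr : 0 < r)
    (hf : DifferentiableOn ℂ f (closedBall c r)) :
    π * r^2 * ‖f c‖ ≤ ∫ w in ball c r, ‖f w‖ := by
  have key := Complex.integral_comp_polarCoord_symm
    ((ball (0:ℂ) r).indicator (fun w => ‖f (c + w)‖))
  -- RHS
  have hRHS : (∫ w, (ball (0:ℂ) r).indicator (fun w => ‖f (c + w)‖) w)
      = ∫ w in ball c r, ‖f w‖ := by
    rw [MeasureTheory.integral_indicator measurableSet_ball]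
    have hmp : MeasurePreserving (fun w : ℂ => c + w) volume volume :=
      measurePreserving_add_left volume c
    have hemb : MeasurableEmbedding (fun w : ℂ => c + w) :=
      (Homeomorph.addLeft c).measurableEmbedding
    have hpre : (fun w : ℂ => c + w) ⁻¹' ball c r = ball (0:ℂ) r := by
      ext w
      simp [mem_ball, dist_eq_norm, add_sub_cancel_left]
    rw [← hpre]
    exact hmp.setIntegral_preimage_emb hemb (fun w => ‖f w‖) (ball c r)
  -- LHS
  have hLHS : (∫ p in polarCoord.target,
        p.1 • (ball (0:ℂ) r).indicator (fun w => ‖f (c + w)‖)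
          (Complex.polarCoord.symm p))
      = ∫ p in Set.Ioo (0:ℝ) r ×ˢ Set.Ioo (-π) π,
          p.1 * ‖f (circleMap c p.1 p.2)‖ := by
    have hsub : Set.Ioo (0:ℝ) r ×ˢ Set.Ioo (-π) π ⊆ polarCoord.target := by
      rw [polarCoord_target]
      exact Set.prod_mono Set.Ioo_subset_Ioi_self (subset_refl _)
    have step : (∫ p in polarCoord.target,
          p.1 • (ball (0:ℂ) r).indicator (fun w => ‖f (c + w)‖)
            (Complex.polarCoord.symm p))
        = ∫ p in polarCoord.target,
            (Set.Ioo (0:ℝ) r ×ˢ Set.Ioo (-π) π).indicator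
              (fun p => p.1 * ‖f (circleMap c p.1 p.2)‖) p := by
      apply MeasureTheory.setIntegral_congr_fun polarCoord.open_target.measurableSet
      intro p hp
      rw [polarCoord_target] at hp
      obtain ⟨hp1, hp2⟩ := hp
      have hcirc : c + Complex.polarCoord.symm p = circleMap c p.1 p.2 := by
        rw [Complex.polarCoord_symm_apply, circleMap, Complex.exp_mul_I]
        push_cast
        ring
      have habs : ‖Complex.polarCoord.symm p‖ = p.1 := by
        rw [Complex.norm_polarCoord_symm, abs_of_pos hp1]
      have hmem : (Complex.polarCoord.symm p ∈ ball (0:ℂ) r) ↔ p.1 < r := by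
        rw [mem_ball_zero_iff, habs]
      show p.1 • (ball (0:ℂ) r).indicator (fun w => ‖f (c + w)‖)
          (Complex.polarCoord.symm p) = _
      by_cases h : p.1 < r
      · rw [Set.indicator_of_mem (show p ∈ Set.Ioo (0:ℝ) r ×ˢ Set.Ioo (-π) π from
          ⟨⟨hp1, h⟩, hp2⟩), Set.indicator_of_mem (hmem.mpr h), hcirc, smul_eq_mul]
      · have hnp : p ∉ Set.Ioo (0:ℝ) r ×ˢ Set.Ioo (-π) π := fun hmem' => h hmem'.1.2
        have hnb : Complex.polarCoord.symm p ∉ ball (0:ℂ) r := fun h' => h (hmem.mp h')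
        rw [Set.indicator_of_notMem hnb, Set.indicator_of_notMem hnp, smul_zero]
    rw [step, MeasureTheory.setIntegral_indicator (by measurability),
      Set.inter_eq_self_of_subset_right hsub]
  rw [hRHS, hLHS] at key
  rw [← key]
  -- continuity / integrability
  have hcm : Continuous fun p : ℝ × ℝ => circleMap c p.1 p.2 := by
    unfold circleMap
    fun_prop
  have hmaps : Set.MapsTo (fun p : ℝ × ℝ => circleMap c p.1 p.2)
      (Set.Icc (0:ℝ) r ×ˢ Set.Icc (-π) π) (closedBall c r) := by
    intro p hp
    rw [mem_closedBall, dist_eq, circleMap_sub_center]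
    have := norm_circleMap_zero p.1 p.2
    rw [this, _root_.abs_of_nonneg hp.1.1]
    exact hp.1.2
  have hgc : ContinuousOn (fun p : ℝ × ℝ => p.1 * ‖f (circleMap c p.1 p.2)‖)
      (Set.Icc (0:ℝ) r ×ˢ Set.Icc (-π) π) :=
    continuous_fst.continuousOn.mul
      ((continuous_norm.comp_continuousOn
        (hf.continuousOn.comp hcm.continuousOn hmaps)))
  have hg_int : IntegrableOn (fun p : ℝ × ℝ => p.1 * ‖f (circleMap c p.1 p.2)‖)
      (Set.Ioo (0:ℝ) r ×ˢ Set.Ioo (-π) π) :=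
    (hgc.integrableOn_compact (isCompact_Icc.prod isCompact_Icc)).mono_set
      (Set.prod_mono Set.Ioo_subset_Icc_self Set.Ioo_subset_Icc_self)
  rw [Measure.volume_eq_prod] at hg_int
  rw [Measure.volume_eq_prod, MeasureTheory.setIntegral_prod _ hg_int]
  -- integrability of the outer integrand
  have hg_int' := hg_int
  rw [IntegrableOn, ← Measure.prod_restrict] at hg_int'
  have houter : Integrable (fun s : ℝ =>
      ∫ θ in Set.Ioo (-π) π, s * ‖f (circleMap c s θ)‖)
      (volume.restrict (Set.Ioo (0:ℝ) r)) := hg_int'.integral_prod_left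
  have hlower : IntegrableOn (fun s : ℝ => s * (2 * π * ‖f c‖))
      (Set.Ioo (0:ℝ) r) :=
    (((continuous_id.mul continuous_const).continuousOn).integrableOn_compact
      isCompact_Icc).mono_set Set.Ioo_subset_Icc_self
  have hmono : (∫ s in Set.Ioo (0:ℝ) r, s * (2 * π * ‖f c‖))
      ≤ ∫ s in Set.Ioo (0:ℝ) r,
          ∫ θ in Set.Ioo (-π) π, s * ‖f (circleMap c s θ)‖ := by
    apply MeasureTheory.setIntegral_mono_on hlower houter measurableSet_Ioo
    intro s hs
    have havg := circle_avg_le hs.1 (hf.mono (closedBall_subset_closedBall hs.2.le))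
    calc s * (2 * π * ‖f c‖)
        ≤ s * ∫ θ in Set.Ioo (-π) π, ‖f (circleMap c s θ)‖ :=
          mul_le_mul_of_nonneg_left havg hs.1.le
      _ = ∫ θ in Set.Ioo (-π) π, s * ‖f (circleMap c s θ)‖ :=
          (MeasureTheory.integral_const_mul s _).symm
  refine le_trans (le_of_eq ?_) hmono
  rw [MeasureTheory.integral_mul_const]
  have hid : (∫ s in Set.Ioo (0:ℝ) r, s) = r ^ 2 / 2 := by
    rw [← MeasureTheory.integral_Ioc_eq_integral_Ioo,
      ← intervalIntegral.integral_of_le hr.le, integral_id]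
    ring
  rw [hid]
  ring

/-- Integration of a holomorphic one-form `f(z) dz` along a fixed continuously differentiable
curve `γ : [0,1] → U` is a bounded linear functional on the Bergman space of `U` (used in the
proofs of Theorems 4.3 and 4.8). -/
theorem stmt_2 (U : Set ℂ) (hU : IsOpen U) (γ : ℝ → ℂ) (hγ : ContDiff ℝ 1 γ)
    (hγU : ∀ t ∈ Set.Icc (0:ℝ) 1, γ t ∈ U) :
    ∃ M : ℝ, 0 ≤ M ∧ ∀ f : ℂ → ℂ,
      DifferentiableOn ℂ f U →
      IntegrableOn (fun z => ‖f z‖ ^ 2) U volume →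
      ‖∫ t in (0:ℝ)..1, f (γ t) * deriv γ t‖
        ≤ M * Real.sqrt (∫ w in U, ‖f w‖ ^ 2) := by
  have hK : IsCompact (γ '' Set.Icc 0 1) := isCompact_Icc.image hγ.continuous
  have hKU : γ '' Set.Icc 0 1 ⊆ U := by
    rintro _ ⟨t, ht, rfl⟩
    exact hγU t ht
  obtain ⟨δ, hδ0, hδU⟩ : ∃ δ > 0, thickening δ (γ '' Set.Icc 0 1) ⊆ U :=
    hK.exists_thickening_subset_open hU hKU
  set r := δ / 2 with hrdef
  have hr0 : 0 < r := by positivity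
  have hrU : ∀ z ∈ γ '' Set.Icc 0 1, closedBall z r ⊆ U := by
    intro z hz
    refine subset_trans ?_ hδU
    refine subset_trans (closedBall_subset_ball (show r < δ by rw [hrdef]; linarith)) ?_
    exact ball_subset_thickening hz δ
  obtain ⟨C, hC⟩ : ∃ C, ∀ t ∈ Set.Icc (0:ℝ) 1, ‖deriv γ t‖ ≤ C :=
    isCompact_Icc.exists_bound_of_continuousOn (hγ.continuous_deriv le_rfl).continuousOn
  set C' := max C 0 with hC'def
  have hC'0 : 0 ≤ C' := le_max_right _ _
  refine ⟨C' * (Real.sqrt (π * r ^ 2))⁻¹, by positivity, ?_⟩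
  intro f hf hint
  set I2 := ∫ w in U, ‖f w‖ ^ 2 with hI2
  have hI2nonneg : 0 ≤ I2 := by
    apply MeasureTheory.setIntegral_nonneg hU.measurableSet
    intro w _
    positivity
  have hpt : ∀ t ∈ Set.uIoc (0:ℝ) 1,
      ‖f (γ t) * deriv γ t‖ ≤ C' * (Real.sqrt (π * r ^ 2))⁻¹ * Real.sqrt I2 := by
    intro t ht
    rw [Set.uIoc_of_le zero_le_one] at ht
    have ht' : t ∈ Set.Icc (0:ℝ) 1 := Set.Ioc_subset_Icc_self ht
    have hz : closedBall (γ t) r ⊆ U := hrU (γ t) ⟨t, ht', rfl⟩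
    have h2 : DifferentiableOn ℂ (fun z => f z * f z) (closedBall (γ t) r) :=
      (hf.mono hz).mul (hf.mono hz)
    have key := submean hr0 h2
    have habs : ∀ w : ℂ, ‖f w * f w‖ = ‖f w‖ ^ 2 := by
      intro w
      rw [norm_mul, sq]
    simp only [habs] at key
    have hsub : (∫ w in ball (γ t) r, ‖f w‖ ^ 2) ≤ I2 := by
      apply MeasureTheory.setIntegral_mono_set hint
      · filter_upwards with w
        positivity
      · exact HasSubset.Subset.eventuallyLE (subset_trans ball_subset_closedBall hz)
    have hkey2 : π * r ^ 2 * ‖f (γ t)‖ ^ 2 ≤ I2 := le_trans key hsub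
    have hfb : ‖f (γ t)‖ ≤ (Real.sqrt (π * r ^ 2))⁻¹ * Real.sqrt I2 := by
      have h1 : ‖f (γ t)‖ ^ 2 ≤ I2 / (π * r ^ 2) := by
        rw [le_div_iff₀ (by positivity)]
        linarith [hkey2]
      have h2' : ‖f (γ t)‖ ≤ Real.sqrt (I2 / (π * r ^ 2)) := by
        rw [show ‖f (γ t)‖ = Real.sqrt (‖f (γ t)‖ ^ 2) by
          rw [Real.sqrt_sq (by positivity)]]
        exact Real.sqrt_le_sqrt h1
      rwa [Real.sqrt_div hI2nonneg, div_eq_mul_inv, mul_comm] at h2'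
    calc ‖f (γ t) * deriv γ t‖ = ‖f (γ t)‖ * ‖deriv γ t‖ := by
          rw [norm_mul]
      _ ≤ ((Real.sqrt (π * r ^ 2))⁻¹ * Real.sqrt I2) * C' := by
          apply mul_le_mul hfb (le_trans (hC t ht') (le_max_left _ _)) (norm_nonneg _)
          positivity
      _ = C' * (Real.sqrt (π * r ^ 2))⁻¹ * Real.sqrt I2 := by ring
  have := intervalIntegral.norm_integral_le_of_norm_le_const hpt
  simpa using this
end

section
/- Let m : ℝ² → ℂ be given by m(ξ₁,ξ₂) = (ξ₁ − iξ₂)/(ξ₁ + iξ₂) for (ξ₁,ξ₂) ≠ (0,0) (and m(0,0) = 0), and let 𝓕 denote the Plancherel (L²) Fourier transform on L²(ℝ²; ℂ) ≅ L²(ℂ; ℂ). Suppose B : L²(ℂ;ℂ) → L²(ℂ;ℂ) is a linear map such that for every u ∈ L²(ℂ;ℂ), 𝓕(Bu) = m · 𝓕(u) almost everywhere. Then for all u, v ∈ L²(ℂ;ℂ), ∫_ℂ (Bu)(z)·v(z) dA(z) = ∫_ℂ (Bv)(z)·u(z) dA(z). -/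
open MeasureTheory Complex FourierTransform

open MeasureTheory Complex FourierTransform ComplexConjugate
open scoped RealInnerProductSpace ENNReal

noncomputable section BeurlingAux
abbrev V2 := EuclideanSpace ℝ (Fin 2)

lemma negMP : MeasurePreserving (fun x : V2 => -x) (volume : Measure V2) volume :=
  (LinearIsometryEquiv.neg ℝ (E := V2)).measurePreserving

def conjCLM : ℂ →L[ℝ] ℂ := Complex.conjLIE.toLinearIsometry.toContinuousLinearMap

def Nmap : Lp ℂ 2 (volume : Measure V2) →L[ℝ] Lp ℂ 2 (volume : Measure V2) :=
  (Lp.compMeasurePreservingₗᵢ ℝ (fun x : V2 => -x) negMP).toContinuousLinearMap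

def Cmap : Lp ℂ 2 (volume : Measure V2) →L[ℝ] Lp ℂ 2 (volume : Measure V2) :=
  conjCLM.compLpL 2 volume

lemma coeFn_Nmap (f : Lp ℂ 2 (volume : Measure V2)) :
    (Nmap f : V2 → ℂ) =ᵐ[volume] fun x => f (-x) :=
  Lp.coeFn_compMeasurePreserving f negMP

lemma coeFn_Cmap (f : Lp ℂ 2 (volume : Measure V2)) :
    (Cmap f : V2 → ℂ) =ᵐ[volume] fun x => conj (f x) :=
  conjCLM.coeFn_compLpL f

lemma bFour_neg (f : V2 → ℂ) (w : V2) :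
    𝓕 (fun x => f (-x)) w = 𝓕 f (-w) := by
  have := Real.fourier_comp_linearIsometry (LinearIsometryEquiv.neg ℝ (E := V2)) f w
  simpa [Function.comp_def] using this

lemma bFour_conj (f : V2 → ℂ) (w : V2) :
    𝓕 (fun x => conj (f (-x))) w = conj (𝓕 f w) := by
  have h1 : 𝓕 (fun x => conj (f (-x))) w
      = 𝓕 (fun x => conj (f x)) (-w) := bFour_neg (fun x => conj (f x)) w
  rw [h1, Real.fourier_eq', Real.fourier_eq', ← integral_conj]
  congr 1
  funext v
  rw [smul_eq_mul, smul_eq_mul, map_mul, ← Complex.exp_conj]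
  congr 2
  simp [Complex.conj_ofReal, inner_neg_right, map_ofNat]

lemma bFour_congr {f g : V2 → ℂ} (h : f =ᵐ[volume] g) :
    𝓕 f = 𝓕 g := by
  funext w
  rw [Real.fourier_eq, Real.fourier_eq]
  exact integral_congr_ae (h.mono fun v hv => by simp only [hv])

lemma int_conj {g : V2 → ℂ} (hg : Integrable g volume) :
    Integrable (fun x => conj (g x)) volume := by
  simpa using (Complex.conjLIE.toLinearIsometry.toContinuousLinearMap).integrable_comp hg

lemma int_neg {g : V2 → ℂ} (hg : Integrable g volume) :
    Integrable (fun x => g (-x)) volume := by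
  rw [← memLp_one_iff_integrable] at hg ⊢
  exact hg.comp_measurePreserving negMP

section Keys
variable (𝓕₂ : Lp ℂ 2 (volume : Measure V2) ≃ₗᵢ[ℂ] Lp ℂ 2 (volume : Measure V2))
  (h𝓕 : ∀ u : Lp ℂ 2 (volume : Measure V2), Integrable (u : V2 → ℂ) volume →
    (𝓕₂ u : V2 → ℂ) =ᵐ[volume] 𝓕 (u : V2 → ℂ))
include h𝓕

lemma key1_base (f : Lp ℂ 2 (volume : Measure V2)) (hf : Integrable (f : V2 → ℂ) volume) :
    𝓕₂ (Cmap (Nmap f)) = Cmap (𝓕₂ f) := by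
  have hNf : Integrable (Nmap f : V2 → ℂ) volume := (int_neg hf).congr (coeFn_Nmap f).symm
  have hKae : (Cmap (Nmap f) : V2 → ℂ) =ᵐ[volume] fun x => conj (f (-x)) :=
    (coeFn_Cmap (Nmap f)).trans ((coeFn_Nmap f).mono fun x hx => congrArg conj hx)
  have hK : Integrable (Cmap (Nmap f) : V2 → ℂ) volume := (int_conj (int_neg hf)).congr hKae.symm
  apply Lp.ext
  calc (𝓕₂ (Cmap (Nmap f)) : V2 → ℂ)
      =ᵐ[volume] 𝓕 (Cmap (Nmap f) : V2 → ℂ) := h𝓕 _ hK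
    _ = 𝓕 (fun x => conj (f (-x))) := bFour_congr hKae
    _ = fun w => conj (𝓕 (f : V2 → ℂ) w) := by
        funext w; exact bFour_conj _ w
    _ =ᵐ[volume] fun w => conj ((𝓕₂ f : V2 → ℂ) w) :=
        (h𝓕 f hf).mono fun w hw => (congrArg conj hw).symm
    _ =ᵐ[volume] (Cmap (𝓕₂ f) : V2 → ℂ) := (coeFn_Cmap (𝓕₂ f)).symm

lemma key2_base (f : Lp ℂ 2 (volume : Measure V2)) (hf : Integrable (f : V2 → ℂ) volume) :
    𝓕₂ (Nmap f) = Nmap (𝓕₂ f) := by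
  have hNf : Integrable (Nmap f : V2 → ℂ) volume := (int_neg hf).congr (coeFn_Nmap f).symm
  apply Lp.ext
  calc (𝓕₂ (Nmap f) : V2 → ℂ)
      =ᵐ[volume] 𝓕 (Nmap f : V2 → ℂ) := h𝓕 _ hNf
    _ = 𝓕 (fun x => f (-x)) := bFour_congr (coeFn_Nmap f)
    _ = fun w => 𝓕 (f : V2 → ℂ) (-w) := by
        funext w; exact bFour_neg _ w
    _ =ᵐ[volume] fun w => (𝓕₂ f : V2 → ℂ) (-w) := by
        have := negMP.quasiMeasurePreserving.ae_eq_comp (h𝓕 f hf)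
        exact (this.mono fun w hw => hw.symm)
    _ =ᵐ[volume] (Nmap (𝓕₂ f) : V2 → ℂ) := (coeFn_Nmap (𝓕₂ f)).symm

lemma key1 (f : Lp ℂ 2 (volume : Measure V2)) :
    𝓕₂ (Cmap (Nmap f)) = Cmap (𝓕₂ f) := by
  revert f
  apply Lp.induction (E := ℂ) (μ := (volume : Measure V2)) (p := 2) (by norm_num : (2:ℝ≥0∞) ≠ ∞)
    (motive := fun f => 𝓕₂ (Cmap (Nmap f)) = Cmap (𝓕₂ f))
  · intro c s hs hμs
    rw [Lp.simpleFunc.coe_indicatorConst]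
    exact key1_base 𝓕₂ h𝓕 _ ((integrable_indicatorConstLp hs hμs.ne c))
  · intro f g hf hg hdisj Pf Pg
    simp only [map_add, Pf, Pg]
  · exact isClosed_eq (𝓕₂.continuous.comp (Cmap.continuous.comp Nmap.continuous))
      (Cmap.continuous.comp 𝓕₂.continuous)

lemma key2 (f : Lp ℂ 2 (volume : Measure V2)) :
    𝓕₂ (Nmap f) = Nmap (𝓕₂ f) := by
  revert f
  apply Lp.induction (E := ℂ) (μ := (volume : Measure V2)) (p := 2) (by norm_num : (2:ℝ≥0∞) ≠ ∞)
    (motive := fun f => 𝓕₂ (Nmap f) = Nmap (𝓕₂ f))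
  · intro c s hs hμs
    rw [Lp.simpleFunc.coe_indicatorConst]
    exact key2_base 𝓕₂ h𝓕 _ ((integrable_indicatorConstLp hs hμs.ne c))
  · intro f g hf hg hdisj Pf Pg
    simp only [map_add, Pf, Pg]
  · exact isClosed_eq (𝓕₂.continuous.comp Nmap.continuous)
      (Nmap.continuous.comp 𝓕₂.continuous)

omit h𝓕 in
lemma NN (f : Lp ℂ 2 (volume : Measure V2)) : Nmap (Nmap f) = f := by
  apply Lp.ext
  calc (Nmap (Nmap f) : V2 → ℂ)
      =ᵐ[volume] fun x => (Nmap f : V2 → ℂ) (-x) := coeFn_Nmap (Nmap f)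
    _ =ᵐ[volume] fun x => (f : V2 → ℂ) (- -x) :=
        (negMP.quasiMeasurePreserving.ae_eq_comp (coeFn_Nmap f))
    _ = (f : V2 → ℂ) := by funext x; rw [neg_neg]

end Keys
end BeurlingAux


/-- Symmetry of the Beurling transform (the planar 'adjoint identity' of Theorem 3.5):
if `B` on `L²(ℝ²;ℂ) ≅ L²(ℂ;ℂ)` has Fourier multiplier symbol
`m(ξ₁,ξ₂) = (ξ₁ − iξ₂)/(ξ₁ + iξ₂)` with respect to the Plancherel transform `𝓕`, then
`∫ (Bu)·v dA = ∫ (Bv)·u dA` for all `u, v ∈ L²`. -/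
theorem stmt_4
    (𝓕₂ : Lp ℂ 2 (volume : Measure (EuclideanSpace ℝ (Fin 2))) ≃ₗᵢ[ℂ]
          Lp ℂ 2 (volume : Measure (EuclideanSpace ℝ (Fin 2))))
    (h𝓕 : ∀ u : Lp ℂ 2 (volume : Measure (EuclideanSpace ℝ (Fin 2))),
      Integrable (u : EuclideanSpace ℝ (Fin 2) → ℂ) volume →
      (𝓕₂ u : EuclideanSpace ℝ (Fin 2) → ℂ)
        =ᵐ[volume] 𝓕 (u : EuclideanSpace ℝ (Fin 2) → ℂ))
    (m : EuclideanSpace ℝ (Fin 2) → ℂ)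
    (hm : ∀ ξ : EuclideanSpace ℝ (Fin 2),
      m ξ = ((ξ 0 : ℂ) - Complex.I * (ξ 1 : ℂ)) / ((ξ 0 : ℂ) + Complex.I * (ξ 1 : ℂ)))
    (B : Lp ℂ 2 (volume : Measure (EuclideanSpace ℝ (Fin 2))) →ₗ[ℂ]
         Lp ℂ 2 (volume : Measure (EuclideanSpace ℝ (Fin 2))))
    (hB : ∀ u : Lp ℂ 2 (volume : Measure (EuclideanSpace ℝ (Fin 2))),
      (𝓕₂ (B u) : EuclideanSpace ℝ (Fin 2) → ℂ)
        =ᵐ[volume] fun ξ => m ξ * (𝓕₂ u : EuclideanSpace ℝ (Fin 2) → ℂ) ξ) :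
    ∀ u v : Lp ℂ 2 (volume : Measure (EuclideanSpace ℝ (Fin 2))),
      ∫ z, (B u : EuclideanSpace ℝ (Fin 2) → ℂ) z * (v : EuclideanSpace ℝ (Fin 2) → ℂ) z ∂volume
        = ∫ z, (B v : EuclideanSpace ℝ (Fin 2) → ℂ) z
            * (u : EuclideanSpace ℝ (Fin 2) → ℂ) z ∂volume := by

  have main : ∀ w x : Lp ℂ 2 (volume : Measure V2),
      ∫ z, (B w : V2 → ℂ) z * (x : V2 → ℂ) z ∂volume
        = ∫ ξ, m (-ξ) * ((𝓕₂ w : V2 → ℂ) (-ξ) * (𝓕₂ x : V2 → ℂ) ξ) ∂volume := by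
    intro w x
    have s1 : ∫ z, (B w : V2 → ℂ) z * (x : V2 → ℂ) z ∂volume
        = inner (𝕜 := ℂ) (Cmap (B w)) x := by
      rw [L2.inner_def]
      apply integral_congr_ae
      filter_upwards [coeFn_Cmap (B w)] with z hz
      simp [RCLike.inner_apply, hz]
      ring
    have s2 : 𝓕₂ (Cmap (B w)) = Cmap (Nmap (𝓕₂ (B w))) := by
      conv_lhs => rw [← NN (B w)]
      rw [key1 𝓕₂ h𝓕 (Nmap (B w)), key2 𝓕₂ h𝓕 (B w)]
    have s3 : inner (𝕜 := ℂ) (Cmap (B w)) x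
        = inner (𝕜 := ℂ) (Cmap (Nmap (𝓕₂ (B w)))) (𝓕₂ x) := by
      rw [← s2, 𝓕₂.inner_map_map]
    have s4 : inner (𝕜 := ℂ) (Cmap (Nmap (𝓕₂ (B w)))) (𝓕₂ x)
        = ∫ ξ, (𝓕₂ (B w) : V2 → ℂ) (-ξ) * (𝓕₂ x : V2 → ℂ) ξ ∂volume := by
      rw [L2.inner_def]
      apply integral_congr_ae
      filter_upwards [coeFn_Cmap (Nmap (𝓕₂ (B w))), coeFn_Nmap (𝓕₂ (B w))] with ξ h1 h2
      simp [RCLike.inner_apply, h1, h2]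
      ring
    have s5 : (fun ξ => (𝓕₂ (B w) : V2 → ℂ) (-ξ))
        =ᵐ[volume] fun ξ => m (-ξ) * (𝓕₂ w : V2 → ℂ) (-ξ) :=
      negMP.quasiMeasurePreserving.ae_eq_comp (hB w)
    rw [s1, s3, s4]
    apply integral_congr_ae
    filter_upwards [s5] with ξ h5
    rw [h5, mul_assoc]
  intro u v
  rw [main u v, main v u]
  have hmeven : ∀ ξ : V2, m (-ξ) = m ξ := by
    intro ξ
    rw [hm, hm]
    have h0 : ((-ξ) 0 : ℝ) = -(ξ 0) := rfl
    have h1 : ((-ξ) 1 : ℝ) = -(ξ 1) := rfl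
    rw [h0, h1]
    push_cast
    rw [show (-(ξ 0 : ℂ) - Complex.I * -(ξ 1 : ℂ)) = -((ξ 0 : ℂ) - Complex.I * (ξ 1 : ℂ)) by ring,
      show (-(ξ 0 : ℂ) + Complex.I * -(ξ 1 : ℂ)) = -((ξ 0 : ℂ) + Complex.I * (ξ 1 : ℂ)) by ring,
      neg_div_neg_eq]
  calc ∫ ξ, m (-ξ) * ((𝓕₂ u : V2 → ℂ) (-ξ) * (𝓕₂ v : V2 → ℂ) ξ) ∂volume
      = ∫ ξ, (fun η => m (-η) * ((𝓕₂ v : V2 → ℂ) (-η) * (𝓕₂ u : V2 → ℂ) η)) (-ξ) ∂volume := by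
        congr 1
        funext ξ
        simp only [neg_neg]
        rw [hmeven ξ]
        ring
    _ = ∫ η, m (-η) * ((𝓕₂ v : V2 → ℂ) (-η) * (𝓕₂ u : V2 → ℂ) η) ∂volume :=
        negMP.integral_comp (Homeomorph.neg V2).measurableEmbedding
          (fun η => m (-η) * ((𝓕₂ v : V2 → ℂ) (-η) * (𝓕₂ u : V2 → ℂ) η))
end

section
/- Let f and g be holomorphic on the open unit disk 𝔻 and set h = f + conj ∘ g. Then for every z with |z| > 1, the limit as r → 1⁻ of (1/(2πi)) ∮_{|w| = r} h(w) / (w − z) dw exists and equals conj(g(0)) − conj(g(1/conj(z))), where ∮_{|w|=r} denotes the integral over the circle of radius r centered at 0, traversed once counterclockwise. (Note 1/conj(z) ∈ 𝔻 since |z| > 1.) -/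
open MeasureTheory Metric Complex Filter

lemma hasDerivAt_conj_conj {g : ℂ → ℂ} {d u : ℂ} (h : HasDerivAt g d ((starRingEnd ℂ) u)) :
    HasDerivAt (fun w => (starRingEnd ℂ) (g ((starRingEnd ℂ) w))) ((starRingEnd ℂ) d) u := by
  rw [hasDerivAt_iff_isLittleO] at h ⊢
  have hc : Filter.Tendsto (starRingEnd ℂ) (nhds u) (nhds ((starRingEnd ℂ) u)) :=
    (Complex.continuous_conj.tendsto u)
  have h2 := h.comp_tendsto hc
  rw [Asymptotics.isLittleO_iff] at h2 ⊢
  intro c hc'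
  filter_upwards [h2 hc'] with x hx
  have e1 : (starRingEnd ℂ) (g ((starRingEnd ℂ) x)) - (starRingEnd ℂ) (g ((starRingEnd ℂ) u))
      - (x - u) • (starRingEnd ℂ) d
      = (starRingEnd ℂ) (g ((starRingEnd ℂ) x) - g ((starRingEnd ℂ) u)
          - ((starRingEnd ℂ) x - (starRingEnd ℂ) u) • d) := by
    simp only [smul_eq_mul, map_sub, map_mul, Complex.conj_conj]
  have e2 : ((starRingEnd ℂ) ∘ fun w => w) x - ((starRingEnd ℂ) ∘ fun w => w) u
      = (starRingEnd ℂ) (x - u) := by simp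
  rw [e1, RCLike.norm_conj]
  calc ‖g ((starRingEnd ℂ) x) - g ((starRingEnd ℂ) u) - ((starRingEnd ℂ) x - (starRingEnd ℂ) u) • d‖
      ≤ c * ‖(starRingEnd ℂ) x - (starRingEnd ℂ) u‖ := hx
    _ = c * ‖x - u‖ := by rw [← map_sub, RCLike.norm_conj]

lemma diffOn_conj_conj {g : ℂ → ℂ} (hg : DifferentiableOn ℂ g (ball (0:ℂ) 1)) :
    DifferentiableOn ℂ (fun w => (starRingEnd ℂ) (g ((starRingEnd ℂ) w))) (ball (0:ℂ) 1) := by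
  intro u hu
  have hu' : (starRingEnd ℂ) u ∈ ball (0:ℂ) 1 := by
    simpa only [mem_ball_zero_iff, RCLike.norm_conj] using hu
  have hd := (hg.differentiableAt (isOpen_ball.mem_nhds hu')).hasDerivAt
  exact (hasDerivAt_conj_conj hd).differentiableAt.differentiableWithinAt

lemma circleMap_reflect (r θ : ℝ) :
    circleMap 0 r (2 * Real.pi - θ) = (starRingEnd ℂ) (circleMap 0 r θ) := by
  simp only [circleMap_zero, map_mul, Complex.conj_ofReal, ← Complex.exp_conj]
  congr 1
  rw [Complex.conj_I]
  have : ((2 * Real.pi - θ : ℝ) : ℂ) * Complex.I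
      = 2 * Real.pi * Complex.I + (θ : ℂ) * (-Complex.I) := by push_cast; ring
  rw [this, Complex.exp_add, Complex.exp_two_pi_mul_I, one_mul]

/-- Restriction to `𝔻* = {|z|>1}` of the Cauchy-type jump integral for the unit circle:
for `h = f + conj ∘ g` harmonic on `𝔻` and `|z| > 1`, the limit as `r → 1⁻` of
`(1/(2πi)) ∮_{|w|=r} h(w)/(w−z) dw` exists and equals `conj(g(0)) − conj(g(1/conj z))`. -/
theorem stmt_10 (f g : ℂ → ℂ) (hf : DifferentiableOn ℂ f (ball (0:ℂ) 1))
    (hg : DifferentiableOn ℂ g (ball (0:ℂ) 1))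
    (h : ℂ → ℂ) (hh : ∀ w, h w = f w + (starRingEnd ℂ) (g w))
    (z : ℂ) (hz : 1 < ‖z‖) :
    Tendsto (fun r : ℝ => (2 * Real.pi * Complex.I)⁻¹ * (∮ w in C(0, r), h w / (w - z)))
      (nhdsWithin 1 (Set.Iio 1))
      (nhds ((starRingEnd ℂ) (g 0) - (starRingEnd ℂ) (g (1 / (starRingEnd ℂ) z)))) := by
  set G : ℂ → ℂ := fun w => (starRingEnd ℂ) (g ((starRingEnd ℂ) w)) with hGdef
  have hz0 : z ≠ 0 := by
    intro hz'; rw [hz'] at hz; simp at hz; linarith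
  have hGd : DifferentiableOn ℂ G (ball (0:ℂ) 1) := diffOn_conj_conj hg
  -- key computation for each r ∈ (0,1)
  have key : ∀ r : ℝ, r ∈ Set.Ioo (0:ℝ) 1 →
      (2 * Real.pi * Complex.I)⁻¹ * (∮ w in C(0, r), h w / (w - z))
        = G 0 - G ((r:ℂ)^2 / z) := by
    intro r ⟨hr0, hr1⟩
    set a : ℂ := (r:ℂ)^2 / z with ha_def
    have hrz : (r : ℝ) < ‖z‖ := lt_trans hr1 hz
    have ha : a ∈ ball (0:ℂ) r := by
      rw [mem_ball_zero_iff]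
      rw [ha_def, norm_div, norm_pow, Complex.norm_real, Real.norm_eq_abs, abs_of_pos hr0]
      rw [div_lt_iff₀ (by linarith)]
      nlinarith
    have hballs : closedBall (0:ℂ) r ⊆ ball (0:ℂ) 1 := closedBall_subset_ball hr1
    have hz_notin : ∀ w : ℂ, w ∈ ball (0:ℂ) 1 → w - z ≠ 0 := by
      intro w hw
      rw [mem_ball_zero_iff] at hw
      intro hc
      rw [sub_eq_zero] at hc
      rw [hc] at hw
      exact absurd hz (by linarith)
    -- f-part vanishes
    have hfd : DifferentiableOn ℂ (fun w => f w / (w - z)) (ball (0:ℂ) 1) :=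
      hf.div ((differentiableOn_id).sub (differentiableOn_const z)) hz_notin
    have hfzero : (∮ w in C(0, r), f w / (w - z)) = 0 := by
      refine circleIntegral_eq_zero_of_differentiable_on_off_countable hr0.le
        Set.countable_empty ((hfd.mono hballs).continuousOn) ?_
      intro w hw
      exact hfd.differentiableAt (isOpen_ball.mem_nhds (ball_subset_ball hr1.le hw.1))
    -- Cauchy integral formulas for G
    have hGdiffAt : ∀ w ∈ ball (0:ℂ) r \ (∅ : Set ℂ), DifferentiableAt ℂ G w := by
      intro w hw
      exact hGd.differentiableAt (isOpen_ball.mem_nhds (ball_subset_ball hr1.le hw.1))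
    have hGc : ContinuousOn G (closedBall (0:ℂ) r) := (hGd.mono hballs).continuousOn
    have I1 : (∮ w in C(0, r), G w / (w - 0)) = 2 * Real.pi * Complex.I * G 0 :=
      Complex.circleIntegral_div_sub_of_differentiable_on_off_countable Set.countable_empty
        (mem_ball_self hr0) hGc hGdiffAt
    have I2 : (∮ w in C(0, r), G w / (w - a)) = 2 * Real.pi * Complex.I * G a :=
      Complex.circleIntegral_div_sub_of_differentiable_on_off_countable Set.countable_empty
        ha hGc hGdiffAt
    -- circle integrability facts
    have hsph : sphere (0:ℂ) r ⊆ closedBall (0:ℂ) r := sphere_subset_closedBall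
    have habs_sphere : ∀ w : ℂ, w ∈ sphere (0:ℂ) r → ‖w‖ = r := by
      intro w hw
      rwa [mem_sphere_zero_iff_norm] at hw
    have hW0 : ∀ w : ℂ, w ∈ sphere (0:ℂ) r → w - 0 ≠ 0 := by
      intro w hw hc
      rw [sub_zero] at hc
      have := habs_sphere w hw
      rw [hc] at this; simp at this; linarith
    have hWa : ∀ w : ℂ, w ∈ sphere (0:ℂ) r → w - a ≠ 0 := by
      intro w hw hc
      rw [sub_eq_zero] at hc
      have h1 := habs_sphere w hw
      rw [mem_ball_zero_iff] at ha
      rw [hc] at h1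
      linarith
    have hGcs : ContinuousOn G (sphere (0:ℂ) r) := hGc.mono hsph
    have ci1 : CircleIntegrable (fun w => G w / (w - 0)) 0 r :=
      ContinuousOn.circleIntegrable hr0.le
        (hGcs.div ((continuousOn_id.sub continuousOn_const)) hW0)
    have ci2 : CircleIntegrable (fun w => G w / (w - a)) 0 r :=
      ContinuousOn.circleIntegrable hr0.le
        (hGcs.div ((continuousOn_id.sub continuousOn_const)) hWa)
    -- substitution step
    have hsub : (∮ w in C(0, r), (starRingEnd ℂ) (g w) / (w - z))
        = ∮ w in C(0, r), (G w / (w - 0) - G w / (w - a)) := by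
      simp only [circleIntegral, deriv_circleMap, smul_eq_mul]
      have hrefl := intervalIntegral.integral_comp_sub_left (a := 0) (b := 2 * Real.pi)
        (fun θ => circleMap 0 r θ * Complex.I *
          ((starRingEnd ℂ) (g (circleMap 0 r θ)) / (circleMap 0 r θ - z))) (2 * Real.pi)
      rw [sub_self, sub_zero] at hrefl
      rw [← hrefl]
      apply intervalIntegral.integral_congr
      intro θ _
      simp only [circleMap_reflect]
      set w : ℂ := circleMap 0 r θ with hw_def
      have habs : ‖w‖ = r := by
        rw [hw_def, norm_circleMap_zero, abs_of_pos hr0]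
      have hw0 : w ≠ 0 := by
        intro hc; rw [hc] at habs; simp at habs; linarith
      have hcw : (starRingEnd ℂ) w = (r:ℂ)^2 / w := by
        rw [eq_div_iff hw0]
        have h1 : (starRingEnd ℂ) w * w = (Complex.normSq w : ℂ) := by
          rw [mul_comm, Complex.mul_conj]
        rw [h1, Complex.normSq_eq_norm_sq, habs]
        push_cast; ring
      have hcz : (starRingEnd ℂ) w - z ≠ 0 := by
        intro hc
        rw [sub_eq_zero] at hc
        have : ‖(starRingEnd ℂ) w‖ = r := by rw [RCLike.norm_conj]; exact habs
        rw [hc] at this; linarith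
      have hwa : w - a ≠ 0 := hWa w (by rwa [mem_sphere_zero_iff_norm])
      show (starRingEnd ℂ) w * Complex.I *
          ((starRingEnd ℂ) (g ((starRingEnd ℂ) w)) / ((starRingEnd ℂ) w - z))
        = w * Complex.I * (G w / (w - 0) - G w / (w - a))
      rw [show G w = (starRingEnd ℂ) (g ((starRingEnd ℂ) w)) from rfl]
      generalize (starRingEnd ℂ) (g ((starRingEnd ℂ) w)) = X
      rw [sub_zero, ha_def]
      rw [hcw] at hcz ⊢
      have hwa' : w - (r:ℂ)^2 / z ≠ 0 := by rwa [ha_def] at hwa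
      have h3 : (r:ℂ)^2 - w * z ≠ 0 := by
        intro hc
        apply hcz
        rw [div_sub' hw0, hc, zero_div]
      have h4 : w * z - (r:ℂ)^2 ≠ 0 := by
        intro hc; apply h3; linear_combination -hc
      have e1 : X / ((r:ℂ)^2/w - z) = X * w / ((r:ℂ)^2 - w * z) := by
        rw [div_sub' hw0, div_div_eq_mul_div]
      have e2 : X / (w - (r:ℂ)^2/z) = X * z / (w * z - (r:ℂ)^2) := by
        rw [sub_div' hz0, div_div_eq_mul_div]
      rw [e1, e2]
      field_simp
      ring
    -- combine
    have hgc : ContinuousOn (fun w => (starRingEnd ℂ) (g w) / (w - z)) (sphere (0:ℂ) r) :=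
      (Complex.continuous_conj.comp_continuousOn
          ((hg.continuousOn).mono (hsph.trans hballs))).div
        (continuousOn_id.sub continuousOn_const) (fun w hw => hz_notin w (hballs (hsph hw)))
    have int_g : CircleIntegrable (fun w => (starRingEnd ℂ) (g w) / (w - z)) 0 r :=
      ContinuousOn.circleIntegrable hr0.le hgc
    have hfun : (fun w : ℂ => h w / (w - z))
        = fun w => f w / (w - z) + (starRingEnd ℂ) (g w) / (w - z) := by
      funext w; rw [hh w, add_div]
    have int_h : CircleIntegrable (fun w => h w / (w - z)) 0 r := by
      rw [hfun]
      exact ContinuousOn.circleIntegrable hr0.le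
        (((hfd.mono hballs).continuousOn.mono hsph).add hgc)
    have hsplit : (∮ w in C(0, r), h w / (w - z))
        = ∮ w in C(0, r), (starRingEnd ℂ) (g w) / (w - z) := by
      have e2 : (fun w : ℂ => f w / (w - z))
          = fun w => h w / (w - z) - (starRingEnd ℂ) (g w) / (w - z) := by
        funext w; rw [hh w]; ring
      rw [e2, circleIntegral.integral_sub int_h int_g] at hfzero
      exact sub_eq_zero.mp hfzero
    rw [hsplit, hsub, circleIntegral.integral_sub ci1 ci2, I1, I2]
    rw [← mul_sub, inv_mul_cancel_left₀ Complex.two_pi_I_ne_zero]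
  -- limit
  have htarget : (starRingEnd ℂ) (g 0) - (starRingEnd ℂ) (g (1 / (starRingEnd ℂ) z))
      = G 0 - G (1 / z) := by
    simp only [hGdef, map_zero, map_div₀, map_one, Complex.conj_conj]
  rw [htarget]
  have hmem : (1:ℂ)/z ∈ ball (0:ℂ) 1 := by
    rw [mem_ball_zero_iff]
    rw [norm_div, norm_one]
    rw [div_lt_one (by linarith)]
    linarith
  have hGcont : ContinuousAt G (1/z) :=
    (hGd.differentiableAt (isOpen_ball.mem_nhds hmem)).continuousAt
  have hlim : Tendsto (fun r : ℝ => G 0 - G ((r:ℂ)^2 / z))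
      (nhdsWithin 1 (Set.Iio 1)) (nhds (G 0 - G (1 / z))) := by
    apply Tendsto.mono_left _ nhdsWithin_le_nhds
    have h1 : Tendsto (fun r : ℝ => ((r:ℂ)^2 / z)) (nhds 1) (nhds (1/z)) := by
      have : ContinuousAt (fun r : ℝ => ((r:ℂ)^2 / z)) 1 := by
        apply ContinuousAt.div _ continuousAt_const hz0
        exact (Complex.continuous_ofReal.continuousAt).pow 2
      simpa using this.tendsto
    exact tendsto_const_nhds.sub (hGcont.tendsto.comp h1)
  refine Tendsto.congr' ?_ hlim
  filter_upwards [Ioo_mem_nhdsLT_of_mem (Set.mem_Ioc.mpr ⟨zero_lt_one, le_refl 1⟩)] with r hr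
  exact (key r hr).symm
end

section
/- Let f be holomorphic on the open unit disk 𝔻 with ∫_𝔻 |f|² dA < ∞. If ∫_𝔻 conj(f(w)) / (w − z)² dA(w) = 0 for every z with |z| > 1, then f = 0 on 𝔻. -/
open MeasureTheory Metric Complex

lemma circleIntegral_finset_sum {ι : Type*} (s : Finset ι) (g : ι → ℂ → ℂ) (c : ℂ) (R : ℝ)
    (h : ∀ i ∈ s, CircleIntegrable (g i) c R) :
    (∮ z in C(c, R), ∑ i ∈ s, g i z) = ∑ i ∈ s, ∮ z in C(c, R), g i z := by
  unfold circleIntegral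
  rw [← intervalIntegral.integral_finset_sum]
  · simp [Finset.mul_sum]
  · exact fun i hi => (h i hi).out

lemma key_circle (n : ℕ) {w : ℂ} (hw : w ∈ ball (0:ℂ) 1) :
    (∮ z in C((0:ℂ), 2), z ^ (n+1) * ((z - w) ^ 2)⁻¹)
      = 2 * Real.pi * I * (n+1) * w ^ n := by
  have hw2 : w ∈ ball (0:ℂ) 2 := by
    simp only [mem_ball, dist_zero_right] at hw ⊢; linarith
  have hwsph : ∀ z ∈ sphere (0:ℂ) 2, z ≠ w := by
    intro z hz
    simp only [mem_sphere_iff_norm, sub_zero] at hz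
    simp only [mem_ball, dist_zero_right] at hw
    intro h; rw [h] at hz; linarith
  have hcong : Set.EqOn (fun z => z ^ (n+1) * ((z - w) ^ 2)⁻¹)
      (fun z => ∑ k ∈ Finset.range (n+2),
        ((n+1).choose k * w ^ (n+1-k)) * (z - w) ^ ((k : ℤ) - 2)) (sphere (0:ℂ) 2) := by
    intro z hz
    have hzw : z - w ≠ 0 := sub_ne_zero.2 (hwsph z hz)
    have hbin : z ^ (n+1) = ∑ k ∈ Finset.range (n+2), (z - w) ^ k * w ^ (n+1-k) * (n+1).choose k := by
      conv_lhs => rw [show z = (z - w) + w by ring]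
      exact add_pow _ _ _
    simp only
    rw [hbin, Finset.sum_mul]
    refine Finset.sum_congr rfl fun k hk => ?_
    have hz2 : (z - w) ^ ((k:ℤ) - 2) = (z - w) ^ k * ((z - w) ^ 2)⁻¹ := by
      rw [zpow_sub₀ hzw, zpow_natCast]
      norm_num [div_eq_mul_inv]
    rw [hz2]; ring
  rw [circleIntegral.integral_congr (by norm_num) hcong]
  have hne : w ∉ sphere (0:ℂ) |(2:ℝ)| := by
    intro h
    exact (hwsph w (by simpa using h)) rfl
  rw [circleIntegral_finset_sum]
  · rw [Finset.sum_eq_single_of_mem 1 (by simp)]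
    · have h1 : ((1:ℕ) : ℤ) - 2 = -1 := by norm_num
      rw [circleIntegral.integral_const_mul, h1]
      simp only [zpow_neg_one]
      rw [circleIntegral.integral_sub_inv_of_mem_ball hw2]
      simp
      ring
    · intro k hk hk1
      rw [circleIntegral.integral_const_mul, circleIntegral.integral_sub_zpow_of_ne, mul_zero]
      omega
  · intro k hk
    exact (circleIntegrable_sub_zpow_iff.2 (Or.inr (Or.inr hne))).const_mul _
lemma integrableOn_f {f : ℂ → ℂ} (hf : DifferentiableOn ℂ f (ball (0:ℂ) 1))
    (hf2 : IntegrableOn (fun w => ‖f w‖ ^ 2) (ball (0:ℂ) 1) volume) :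
    IntegrableOn f (ball (0:ℂ) 1) volume := by
  have hasm : AEStronglyMeasurable f (volume.restrict (ball (0:ℂ) 1)) :=
    hf.continuousOn.aestronglyMeasurable measurableSet_ball
  have hc : IntegrableOn (fun _ : ℂ => (1:ℝ)) (ball (0:ℂ) 1) volume :=
    integrableOn_const measure_ball_lt_top.ne
  have hg : IntegrableOn (fun w => 1 + ‖f w‖ ^ 2) (ball (0:ℂ) 1) volume := hc.add hf2
  refine hg.mono' hasm ?_
  filter_upwards with w
  have : ‖f w‖ ≤ 1 + ‖f w‖ ^ 2 := by nlinarith [norm_nonneg (f w), sq_nonneg (‖f w‖ - 1)]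
  simpa using this

lemma moments {f : ℂ → ℂ} (hf : DifferentiableOn ℂ f (ball (0:ℂ) 1))
    (hf2 : IntegrableOn (fun w => ‖f w‖ ^ 2) (ball (0:ℂ) 1) volume)
    (hT : ∀ z : ℂ, 1 < ‖z‖ →
      (∫ w in ball (0:ℂ) 1, (starRingEnd ℂ) (f w) / (w - z) ^ 2) = 0) (n : ℕ) :
    ∫ w in ball (0:ℂ) 1, (starRingEnd ℂ) (f w) * w ^ n = 0 := by
  have hfint := integrableOn_f hf hf2
  set c : ℝ → ℂ := fun θ => circleMap 0 2 θ * I * (circleMap 0 2 θ) ^ (n+1) with hc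
  set F : ℝ × ℂ → ℂ :=
    fun p => c p.1 * ((starRingEnd ℂ) (f p.2) / (p.2 - circleMap 0 2 p.1) ^ 2) with hF
  -- each slice is zero
  have hzero : ∀ θ : ℝ, (∫ w in ball (0:ℂ) 1, F (θ, w)) = 0 := by
    intro θ
    rw [hF]
    simp only
    rw [integral_const_mul, hT (circleMap 0 2 θ) (by simp [circleMap]), mul_zero]
  -- integrability on the product
  have hS : MeasurableSet ((Set.Ioc (0:ℝ) (2*Real.pi)) ×ˢ ball (0:ℂ) 1) :=
    measurableSet_Ioc.prod measurableSet_ball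
  have hcont : ContinuousOn F ((Set.Ioc (0:ℝ) (2*Real.pi)) ×ˢ ball (0:ℂ) 1) := by
    apply ContinuousOn.mul
    · exact (((continuous_circleMap 0 2).mul continuous_const).mul
        ((continuous_circleMap 0 2).pow _)).comp_continuousOn continuousOn_fst
    · apply ContinuousOn.div
      · exact continuous_star.comp_continuousOn
          (hf.continuousOn.comp continuousOn_snd (fun p hp => hp.2))
      · exact ((continuous_snd.sub ((continuous_circleMap 0 2).comp continuous_fst)).pow 2).continuousOn
      · rintro ⟨θ, w⟩ ⟨hθ, hwb⟩
        simp only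
        have h1 : ‖w‖ < 1 := by simpa [mem_ball, dist_zero_right] using hwb
        have h2 : ‖circleMap 0 2 θ‖ = 2 := by simp [circleMap]
        apply pow_ne_zero
        intro h
        rw [sub_eq_zero] at h
        rw [h, h2] at h1; linarith
  have hmeas : AEStronglyMeasurable F
      ((volume.restrict (Set.Ioc (0:ℝ) (2*Real.pi))).prod (volume.restrict (ball (0:ℂ) 1))) := by
    rw [Measure.prod_restrict]
    exact hcont.aestronglyMeasurable hS
  have hbound : ∀ θ w, w ∈ ball (0:ℂ) 1 → ‖F (θ, w)‖ ≤ 2 ^ (n+2) * ‖f w‖ := by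
    intro θ w hwb
    have h1 : ‖w‖ < 1 := by simpa [mem_ball, dist_zero_right] using hwb
    have h2 : ‖circleMap 0 2 θ‖ = 2 := by simp [circleMap]
    have hd : (1:ℝ) ≤ ‖w - circleMap 0 2 θ‖ := by
      have h3 := norm_sub_norm_le (circleMap 0 2 θ) w
      rw [norm_sub_rev] at h3
      linarith
    have habs : ‖c θ‖ = 2 ^ (n+2) := by
      rw [hc]
      simp only [norm_mul, norm_pow, Complex.norm_I, h2]
      ring
    have hcalc : ‖F (θ, w)‖ = ‖c θ‖ *
        (‖f w‖ / ‖w - circleMap 0 2 θ‖ ^ 2) := by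
      rw [hF]
      simp [norm_mul, norm_div, norm_pow]
    rw [hcalc, habs]
    have hden : (1:ℝ) ≤ ‖w - circleMap 0 2 θ‖ ^ 2 := by nlinarith
    have hfr : ‖f w‖ / ‖w - circleMap 0 2 θ‖ ^ 2 ≤ ‖f w‖ := by
      rw [div_le_iff₀ (by linarith)]
      nlinarith [norm_nonneg (f w)]
    calc (2:ℝ) ^ (n+2) * (‖f w‖ / ‖w - circleMap 0 2 θ‖ ^ 2)
        ≤ 2 ^ (n+2) * ‖f w‖ := by
          apply mul_le_mul_of_nonneg_left hfr; positivity
      _ = 2 ^ (n+2) * ‖f w‖ := by ring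
  have hFint : Integrable F
      ((volume.restrict (Set.Ioc (0:ℝ) (2*Real.pi))).prod (volume.restrict (ball (0:ℂ) 1))) := by
    have hdom : Integrable (fun p : ℝ × ℂ => (2:ℝ) ^ (n+2) * ‖f p.2‖)
        ((volume.restrict (Set.Ioc (0:ℝ) (2*Real.pi))).prod (volume.restrict (ball (0:ℂ) 1))) := by
      exact Integrable.mul_prod (integrableOn_const (C := (2:ℝ) ^ (n+2)) (s := Set.Ioc (0:ℝ) (2*Real.pi)) (μ := volume) (by simp [Real.pi_pos, ENNReal.mul_eq_top])) hfint.norm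
    refine hdom.mono' hmeas ?_
    rw [Measure.prod_restrict]
    filter_upwards [ae_restrict_mem hS] with p hp
    have := hbound p.1 p.2 hp.2
    simpa [_root_.abs_of_nonneg (norm_nonneg (f p.2))] using this
  -- swap
  have hswap := integral_integral_swap (f := fun θ w => F (θ, w)) hFint
  have hlhs : (∫ θ in Set.Ioc (0:ℝ) (2*Real.pi), ∫ w in ball (0:ℂ) 1, F (θ, w)) = 0 := by
    simp [hzero]
  rw [hswap] at hlhs
  -- inner integral is the circle integral
  have hinner : ∀ w ∈ ball (0:ℂ) 1,
      (∫ θ in Set.Ioc (0:ℝ) (2*Real.pi), F (θ, w))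
        = (starRingEnd ℂ) (f w) * (2 * Real.pi * I * (n+1) * w ^ n) := by
    intro w hwb
    have : (∫ θ in Set.Ioc (0:ℝ) (2*Real.pi), F (θ, w))
        = ∫ θ in Set.Ioc (0:ℝ) (2*Real.pi),
            (starRingEnd ℂ) (f w) * (deriv (circleMap 0 2) θ •
              ((circleMap 0 2 θ) ^ (n+1) * ((circleMap 0 2 θ - w) ^ 2)⁻¹)) := by
      apply setIntegral_congr_fun measurableSet_Ioc
      intro θ _
      rw [hF]
      simp only [deriv_circleMap, smul_eq_mul, hc]
      have hne : (w - circleMap 0 2 θ) ^ 2 ≠ 0 := by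
        have h1 : ‖w‖ < 1 := by simpa [mem_ball, dist_zero_right] using hwb
        have h2 : ‖circleMap 0 2 θ‖ = 2 := by simp [circleMap]
        apply pow_ne_zero; intro h; rw [sub_eq_zero] at h; rw [h, h2] at h1; linarith
      have hsq : (w - circleMap 0 2 θ) ^ 2 = (circleMap 0 2 θ - w) ^ 2 := by ring
      rw [div_eq_mul_inv, hsq]
      ring
    rw [this, integral_const_mul]
    congr 1
    have h2 : (∮ z in C((0:ℂ), 2), z ^ (n+1) * ((z - w) ^ 2)⁻¹)
        = ∫ θ in Set.Ioc (0:ℝ) (2*Real.pi), deriv (circleMap 0 2) θ •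
            ((circleMap 0 2 θ) ^ (n+1) * ((circleMap 0 2 θ - w) ^ 2)⁻¹) := by
      rw [circleIntegral, intervalIntegral.integral_of_le (by positivity)]
    rw [← h2, key_circle n hwb]
  have hinner2 : (∫ w in ball (0:ℂ) 1, ∫ θ in Set.Ioc (0:ℝ) (2*Real.pi), F (θ, w))
      = ∫ w in ball (0:ℂ) 1, (starRingEnd ℂ) (f w) * (2 * Real.pi * I * (n+1) * w ^ n) :=
    setIntegral_congr_fun measurableSet_ball hinner
  rw [hinner2] at hlhs
  have := hlhs
  have hrw : (∫ w in ball (0:ℂ) 1, (starRingEnd ℂ) (f w) * (2 * Real.pi * I * (n+1) * w ^ n))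
      = (2 * Real.pi * I * (n+1)) * ∫ w in ball (0:ℂ) 1, (starRingEnd ℂ) (f w) * w ^ n := by
    rw [← integral_const_mul]
    congr 1; funext w; ring
  rw [hrw] at this
  have hne : (2 * (Real.pi:ℂ) * I * (n+1)) ≠ 0 := by
    apply mul_ne_zero
    · exact Complex.two_pi_I_ne_zero
    · intro h; exact_mod_cast h
  exact (mul_eq_zero.1 this).resolve_left hne
noncomputable def schifferCoeff (f : ℂ → ℂ) (n : ℕ) : ℂ :=
  (cauchyPowerSeries f 0 ((2⁻¹ : NNReal) : ℝ)).coeff n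

lemma hasFPSB {f : ℂ → ℂ} (hf : DifferentiableOn ℂ f (ball (0:ℂ) 1)) (r : NNReal)
    (hr0 : 0 < r) (hr1 : (r:ℝ) < 1) :
    HasFPowerSeriesOnBall f (cauchyPowerSeries f 0 (r:ℝ)) 0 r :=
  (hf.mono (closedBall_subset_ball hr1)).hasFPowerSeriesOnBall hr0

lemma coeff_eq {f : ℂ → ℂ} (hf : DifferentiableOn ℂ f (ball (0:ℂ) 1)) (r : NNReal)
    (hr0 : 0 < r) (hr1 : (r:ℝ) < 1) (n : ℕ) :
    (cauchyPowerSeries f 0 (r:ℝ)).coeff n = schifferCoeff f n := by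
  have h1 := (hasFPSB hf r hr0 hr1).hasFPowerSeriesAt
  have h2 := (hasFPSB hf 2⁻¹ (by norm_num) (by norm_num)).hasFPowerSeriesAt
  rw [h1.eq_formalMultilinearSeries h2, schifferCoeff]

lemma per_circle {f : ℂ → ℂ} (hf : DifferentiableOn ℂ f (ball (0:ℂ) 1)) (n : ℕ)
    {r : ℝ} (hr0 : 0 < r) (hr1 : r < 1) :
    (∫ θ in Set.Ioo (-Real.pi) Real.pi,
        (r:ℂ) * (f (circleMap 0 r θ) * ((starRingEnd ℂ) (circleMap 0 r θ)) ^ n))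
      = 2 * Real.pi * (r:ℂ) ^ (2*n+1) * schifferCoeff f n := by
  have hπ := Real.pi_pos
  set G : ℝ → ℂ := fun θ =>
    (r:ℂ) * (f (circleMap 0 r θ) * ((starRingEnd ℂ) (circleMap 0 r θ)) ^ n) with hG
  -- coefficient as circle integral
  set r' : NNReal := ⟨r, hr0.le⟩ with hr'
  have hcoeff : (cauchyPowerSeries f 0 r).coeff n = schifferCoeff f n := by
    have := coeff_eq hf r' (NNReal.coe_pos.1 hr0) hr1 n
    exact this
  have happly : (cauchyPowerSeries f 0 r).coeff n
      = (2 * Real.pi * I : ℂ)⁻¹ • ∮ z in C((0:ℂ), r), ((1:ℂ) / (z - 0)) ^ n • (z - 0)⁻¹ • f z := by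
    rw [← cauchyPowerSeries_apply f 0 r n 1]
    rfl
  have hA : (∮ z in C((0:ℂ), r), ((1:ℂ) / (z - 0)) ^ n • (z - 0)⁻¹ • f z)
      = (2 * Real.pi * I : ℂ) * schifferCoeff f n := by
    rw [← hcoeff, happly, smul_eq_mul, ← mul_assoc, mul_inv_cancel₀ Complex.two_pi_I_ne_zero, one_mul]
  -- move from Ioo to interval integral over [0, 2π]
  have hGper : Function.Periodic G (2*Real.pi) := by
    intro θ
    have h := periodic_circleMap 0 r θ
    simp only [hG, h]
  have step1 : (∫ θ in Set.Ioo (-Real.pi) Real.pi, G θ) = ∫ θ in (0:ℝ)..(2*Real.pi), G θ := by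
    rw [← integral_Ioc_eq_integral_Ioo,
      ← intervalIntegral.integral_of_le (by linarith : -Real.pi ≤ Real.pi)]
    have := hGper.intervalIntegral_add_eq (-Real.pi) 0
    simpa [show -Real.pi + 2*Real.pi = Real.pi by ring] using this
  -- pointwise identity
  have hpt : ∀ θ : ℝ, G θ = ((r:ℂ) ^ (2*n+1) * I⁻¹) *
      (deriv (circleMap 0 r) θ • (((1:ℂ) / (circleMap 0 r θ - 0)) ^ n •
        (circleMap 0 r θ - 0)⁻¹ • f (circleMap 0 r θ))) := by
    intro θ
    set z := circleMap 0 r θ with hz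
    have hzne : z ≠ 0 := by
      have habs : ‖z‖ = |r| := norm_circleMap_zero r θ
      intro h0
      rw [h0, norm_zero] at habs
      rw [abs_of_pos hr0] at habs
      linarith
    have hconj : (starRingEnd ℂ) z = (r:ℂ)^2 * z⁻¹ := by
      have h := Complex.mul_conj z
      have habs : Complex.normSq z = r^2 := by
        rw [Complex.normSq_eq_norm_sq, hz, norm_circleMap_zero, abs_of_pos hr0]
      rw [habs] at h
      field_simp at h ⊢
      exact_mod_cast h
    rw [hG]
    simp only [deriv_circleMap, ← hz, sub_zero, smul_eq_mul, hconj]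
    rw [mul_pow, ← pow_mul]
    field_simp [hzne, Complex.I_ne_zero]
    ring_nf
  rw [step1]
  have step2 : (∫ θ in (0:ℝ)..(2*Real.pi), G θ)
      = ((r:ℂ) ^ (2*n+1) * I⁻¹) * ∮ z in C((0:ℂ), r), ((1:ℂ) / (z - 0)) ^ n • (z - 0)⁻¹ • f z := by
    rw [circleIntegral, ← intervalIntegral.integral_const_mul]
    exact intervalIntegral.integral_congr (fun θ _ => hpt θ)
  rw [step2, hA]
  have : (I : ℂ) ≠ 0 := Complex.I_ne_zero
  field_simp
lemma polarCoord_symm_eq (p : ℝ × ℝ) : Complex.polarCoord.symm p = circleMap 0 p.1 p.2 := by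
  simp [Complex.polarCoord_symm_apply, circleMap, Complex.exp_mul_I]

lemma ball_rho {f : ℂ → ℂ} (hf : DifferentiableOn ℂ f (ball (0:ℂ) 1)) (n : ℕ)
    {ρ : ℝ} (h0 : 0 < ρ) (h1 : ρ < 1) :
    (∫ w in ball (0:ℂ) ρ, f w * ((starRingEnd ℂ) w) ^ n)
      = 2 * Real.pi * ((ρ:ℂ)^(2*n+2)/(2*n+2)) * schifferCoeff f n := by
  have hπ := Real.pi_pos
  set g : ℂ → ℂ := fun w => f w * ((starRingEnd ℂ) w) ^ n with hg
  set F₂ : ℝ × ℝ → ℂ := fun p =>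
    p.1 • (f (circleMap 0 p.1 p.2) * ((starRingEnd ℂ) (circleMap 0 p.1 p.2)) ^ n) with hF₂
  set T' : Set (ℝ × ℝ) := Set.Ioo (0:ℝ) ρ ×ˢ Set.Ioo (-Real.pi) Real.pi with hT'
  have hmain := Complex.integral_comp_polarCoord_symm (Set.indicator (ball (0:ℂ) ρ) g)
  rw [integral_indicator measurableSet_ball] at hmain
  have hcongr : ∀ p ∈ polarCoord.target,
      p.1 • Set.indicator (ball (0:ℂ) ρ) g (Complex.polarCoord.symm p) = T'.indicator F₂ p := by
    rintro ⟨r, θ⟩ hp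
    rw [polarCoord_target] at hp
    obtain ⟨hr, hθ⟩ := hp
    simp only [Set.mem_Ioi] at hr
    have habs : ‖Complex.polarCoord.symm (r, θ)‖ = r := by
      rw [Complex.norm_polarCoord_symm]; exact abs_of_pos hr
    by_cases hrρ : r < ρ
    · have hmem : Complex.polarCoord.symm (r, θ) ∈ ball (0:ℂ) ρ := by
        rw [mem_ball, dist_zero_right, habs]; exact hrρ
      have hmem' : ((r, θ) : ℝ × ℝ) ∈ T' := ⟨⟨hr, hrρ⟩, hθ⟩
      rw [Set.indicator_of_mem hmem, Set.indicator_of_mem hmem']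
      rw [hg, hF₂]
      simp only [polarCoord_symm_eq]
    · have hmem : Complex.polarCoord.symm (r, θ) ∉ ball (0:ℂ) ρ := by
        simp only [mem_ball, dist_zero_right, habs]
        exact fun h => hrρ h
      have hmem' : ((r, θ) : ℝ × ℝ) ∉ T' := fun h => hrρ h.1.2
      rw [Set.indicator_of_notMem hmem, Set.indicator_of_notMem hmem', smul_zero]
  rw [setIntegral_congr_fun polarCoord.open_target.measurableSet hcongr,
    setIntegral_indicator (measurableSet_Ioo.prod measurableSet_Ioo),
    Set.inter_eq_self_of_subset_right
      (by rw [polarCoord_target]; exact Set.prod_mono Set.Ioo_subset_Ioi_self subset_rfl)]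
    at hmain
  -- integrability on T'
  obtain ⟨M, hM⟩ := (isCompact_closedBall (0:ℂ) ρ).exists_bound_of_continuousOn
    (hf.continuousOn.mono (closedBall_subset_ball h1))
  have hcm : Continuous (fun p : ℝ × ℝ => circleMap 0 p.1 p.2) := by
    simp only [circleMap, zero_add]
    exact (Complex.continuous_ofReal.comp continuous_fst).mul
      (Complex.continuous_exp.comp ((Complex.continuous_ofReal.comp continuous_snd).mul
        continuous_const))
  have hmaps : ∀ p ∈ T', circleMap 0 p.1 p.2 ∈ ball (0:ℂ) 1 := by
    rintro ⟨r, θ⟩ ⟨⟨hr0, hrρ⟩, _⟩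
    simp only [mem_ball, dist_zero_right, norm_circleMap_zero]
    rw [abs_of_pos hr0]; linarith
  have hInt : IntegrableOn F₂ T' (volume.prod volume) := by
    have hASM : AEStronglyMeasurable F₂ ((volume.prod volume).restrict T') := by
      apply ContinuousOn.aestronglyMeasurable _ (measurableSet_Ioo.prod measurableSet_Ioo)
      apply ContinuousOn.smul continuous_fst.continuousOn
      apply ContinuousOn.mul
      · exact hf.continuousOn.comp hcm.continuousOn hmaps
      · exact (continuous_star.comp hcm).continuousOn.pow n
    refine Integrable.mono' (g := fun _ => M) ?_ hASM ?_
    · refine integrableOn_const ?_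
      rw [Measure.prod_prod]
      exact (ENNReal.mul_lt_top measure_Ioo_lt_top measure_Ioo_lt_top).ne
    · filter_upwards [ae_restrict_mem (measurableSet_Ioo.prod measurableSet_Ioo)] with p hp
      obtain ⟨⟨hr0', hrρ⟩, _⟩ := hp
      have hz : ‖circleMap 0 p.1 p.2‖ = p.1 := by
        rw [norm_circleMap_zero, abs_of_pos hr0']
      have hzball : circleMap 0 p.1 p.2 ∈ closedBall (0:ℂ) ρ := by
        simp only [mem_closedBall, dist_zero_right, hz]; linarith
      have hfb := hM _ hzball
      have hMnn : 0 ≤ M := le_trans (norm_nonneg _) (hM 0 (mem_closedBall_self h0.le))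
      rw [hF₂]
      simp only [norm_smul, norm_mul, Real.norm_eq_abs, norm_pow, map_pow,
        Complex.norm_conj, hz, abs_of_pos hr0']
      have h1' : p.1 ^ n ≤ 1 := pow_le_one₀ hr0'.le (by linarith)
      have : ‖f (circleMap 0 p.1 p.2)‖ * p.1 ^ n ≤ M * 1 := by
        apply mul_le_mul _ h1' (by positivity) hMnn
        simpa using hfb
      nlinarith [norm_nonneg (f (circleMap 0 p.1 p.2)), pow_nonneg hr0'.le n]
  rw [Measure.volume_eq_prod ℝ ℝ, MeasureTheory.setIntegral_prod _ hInt] at hmain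
  -- inner integral via per_circle
  have hinner : ∀ r ∈ Set.Ioo (0:ℝ) ρ,
      (∫ θ in Set.Ioo (-Real.pi) Real.pi, F₂ (r, θ))
        = 2 * Real.pi * (r:ℂ) ^ (2*n+1) * schifferCoeff f n := by
    intro r hr
    rw [← per_circle hf n hr.1 (lt_trans hr.2 h1)]
    apply setIntegral_congr_fun measurableSet_Ioo
    intro θ _
    rw [hF₂]
    simp only [Complex.real_smul]
  rw [setIntegral_congr_fun measurableSet_Ioo hinner] at hmain
  -- outer integral
  have houter : (∫ r in Set.Ioo (0:ℝ) ρ, 2 * (Real.pi:ℂ) * (r:ℂ) ^ (2*n+1) * schifferCoeff f n)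
      = 2 * Real.pi * ((ρ:ℂ)^(2*n+2)/(2*n+2)) * schifferCoeff f n := by
    rw [← integral_Ioc_eq_integral_Ioo, ← intervalIntegral.integral_of_le h0.le]
    have hptw : ∀ r : ℝ, 2 * (Real.pi:ℂ) * (r:ℂ) ^ (2*n+1) * schifferCoeff f n
        = (2 * (Real.pi:ℂ) * schifferCoeff f n) * ((r ^ (2*n+1) : ℝ) : ℂ) := by
      intro r; push_cast; ring
    rw [intervalIntegral.integral_congr (fun r _ => hptw r),
      intervalIntegral.integral_const_mul, intervalIntegral.integral_ofReal, integral_pow]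
    push_cast
    rw [zero_pow (by omega)]
    ring
  rw [houter] at hmain
  exact hmain.symm
lemma coeff_zero {f : ℂ → ℂ} (hf : DifferentiableOn ℂ f (ball (0:ℂ) 1))
    (hf2 : IntegrableOn (fun w => ‖f w‖ ^ 2) (ball (0:ℂ) 1) volume)
    (hT : ∀ z : ℂ, 1 < ‖z‖ →
      (∫ w in ball (0:ℂ) 1, (starRingEnd ℂ) (f w) / (w - z) ^ 2) = 0) (n : ℕ) :
    schifferCoeff f n = 0 := by
  have hfint := integrableOn_f hf hf2
  -- conjugate moment
  have hconjm : (∫ w in ball (0:ℂ) 1, f w * ((starRingEnd ℂ) w) ^ n) = 0 := by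
    have h := moments hf hf2 hT n
    have h2 : (∫ w in ball (0:ℂ) 1, f w * ((starRingEnd ℂ) w) ^ n)
        = ∫ w in ball (0:ℂ) 1, (starRingEnd ℂ) ((starRingEnd ℂ) (f w) * w ^ n) := by
      apply setIntegral_congr_fun measurableSet_ball
      intro w _
      simp [map_mul, map_pow]
    rw [h2, integral_conj, h, map_zero]
  -- integrand integrable on ball 1
  have hgint : IntegrableOn (fun w => f w * ((starRingEnd ℂ) w) ^ n) (ball (0:ℂ) 1) volume := by
    have hASM : AEStronglyMeasurable (fun w => f w * ((starRingEnd ℂ) w) ^ n)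
        (volume.restrict (ball (0:ℂ) 1)) :=
      (hf.continuousOn.mul ((continuous_star.pow n).continuousOn)).aestronglyMeasurable
        measurableSet_ball
    refine hfint.norm.mono' hASM ?_
    filter_upwards [ae_restrict_mem measurableSet_ball] with w hw
    have h1 : ‖w‖ < 1 := by simpa [mem_ball, dist_zero_right] using hw
    simp only [norm_mul, norm_pow, Complex.norm_conj, norm_norm]
    have : ‖w‖ ^ n ≤ 1 := pow_le_one₀ (norm_nonneg w) h1.le
    nlinarith [norm_nonneg (f w), pow_nonneg (norm_nonneg w) n]
  -- monotone family
  set ρ : ℕ → ℝ := fun k => 1 - 1/(k+2) with hρ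
  have hρ0 : ∀ k, 0 < ρ k := by
    intro k
    have : (1:ℝ)/(k+2) ≤ 1/2 := by
      apply div_le_div_of_nonneg_left one_pos.le two_pos
      exact_mod_cast by omega
    simp only [hρ]; linarith
  have hρ1 : ∀ k, ρ k < 1 := by
    intro k
    have : (0:ℝ) < 1/(k+2) := by positivity
    simp only [hρ]; linarith
  have hρmono : Monotone ρ := by
    intro a b hab
    simp only [hρ, sub_le_sub_iff_left]
    apply div_le_div_of_nonneg_left one_pos.le (by positivity)
    exact_mod_cast by omega
  have hunion : (⋃ k, ball (0:ℂ) (ρ k)) = ball (0:ℂ) 1 := by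
    apply Set.Subset.antisymm
    · exact Set.iUnion_subset fun k => ball_subset_ball (hρ1 k).le
    · intro w hw
      have h1 : ‖w‖ < 1 := by simpa [mem_ball, dist_zero_right] using hw
      obtain ⟨k, hk⟩ := exists_nat_one_div_lt (by linarith : (0:ℝ) < 1 - ‖w‖)
      refine Set.mem_iUnion.2 ⟨k, ?_⟩
      have : (1:ℝ)/(k+2) ≤ 1/(k+1) := by
        apply div_le_div_of_nonneg_left one_pos.le (by positivity)
        push_cast; linarith
      simp only [mem_ball, dist_zero_right, hρ]
      have hk' : (1:ℝ)/(k+1) < 1 - ‖w‖ := by exact_mod_cast hk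
      linarith
  have htend := tendsto_setIntegral_of_monotone (fun k => measurableSet_ball)
      (fun a b hab => ball_subset_ball (hρmono hab)) (hunion ▸ hgint)
  rw [hunion, hconjm] at htend
  -- values
  have hval : ∀ k, (∫ w in ball (0:ℂ) (ρ k), f w * ((starRingEnd ℂ) w) ^ n)
      = 2 * Real.pi * ((ρ k:ℂ)^(2*n+2)/(2*n+2)) * schifferCoeff f n :=
    fun k => ball_rho hf n (hρ0 k) (hρ1 k)
  have htend2 : Filter.Tendsto
      (fun k => 2 * (Real.pi:ℂ) * ((ρ k:ℂ)^(2*n+2)/(2*n+2)) * schifferCoeff f n)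
      Filter.atTop (nhds (2 * Real.pi * ((1:ℂ)/(2*n+2)) * schifferCoeff f n)) := by
    have hρlim : Filter.Tendsto ρ Filter.atTop (nhds 1) := by
      have h2 : Filter.Tendsto (fun k : ℕ => (1:ℝ)/(k+2)) Filter.atTop (nhds 0) := by
        have hcomp := (tendsto_one_div_atTop_nhds_zero_nat (𝕜 := ℝ)).comp (Filter.tendsto_add_atTop_nat 2)
        apply hcomp.congr
        intro k
        simp only [Function.comp_apply]
        push_cast
        ring
      have := Filter.Tendsto.const_sub (1:ℝ) h2
      simpa [hρ] using this
    have hclim : Filter.Tendsto (fun k => ((ρ k : ℝ) : ℂ)) Filter.atTop (nhds 1) := by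
      have := (Complex.continuous_ofReal.tendsto 1).comp hρlim
      exact this
    have := ((hclim.pow (2*n+2)).div_const ((2*n+2 : ℕ):ℂ)).const_mul (2 * (Real.pi:ℂ))
    have h3 := this.mul_const (schifferCoeff f n)
    simp only [one_pow] at h3
    convert h3 using 2 <;> push_cast <;> ring
  have heq := tendsto_nhds_unique (htend2.congr (fun k => (hval k).symm)) htend
  have hne : 2 * (Real.pi:ℂ) * ((1:ℂ)/(2*n+2)) ≠ 0 := by
    apply mul_ne_zero
    · apply mul_ne_zero two_ne_zero
      exact_mod_cast Real.pi_ne_zero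
    · apply div_ne_zero one_ne_zero
      have : (0:ℝ) < 2*n+2 := by positivity
      intro h
      have : ((2*n+2 : ℝ) : ℂ) = 0 := by push_cast at h ⊢; exact_mod_cast h
      rw [Complex.ofReal_eq_zero] at this
      linarith
  rcases mul_eq_zero.1 heq with h | h
  · exact absurd h hne
  · exact h

/-- Injectivity of the Schiffer operator `T(𝔻,𝔻*)` (instance of Corollary 4.10 for the unit
circle): if `f` is in the Bergman space of `𝔻` and `∫_𝔻 conj(f(w))/(w−z)² dA(w) = 0` for all
`|z| > 1`, then `f = 0` on `𝔻`. -/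
theorem stmt_14 (f : ℂ → ℂ) (hf : DifferentiableOn ℂ f (ball (0:ℂ) 1))
    (hf2 : IntegrableOn (fun w => ‖f w‖ ^ 2) (ball (0:ℂ) 1) volume)
    (hT : ∀ z : ℂ, 1 < ‖z‖ →
      (∫ w in ball (0:ℂ) 1, (starRingEnd ℂ) (f w) / (w - z) ^ 2) = 0) :
    ∀ z ∈ ball (0:ℂ) 1, f z = 0 := by
  have hps := hasFPSB hf 2⁻¹ (by norm_num) (by norm_num)
  have hzero : ∀ y ∈ ball (0:ℂ) ((2⁻¹ : NNReal) : ℝ), f y = 0 := by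
    intro y hy
    have hy' : y ∈ EMetric.ball (0:ℂ) ((2⁻¹ : NNReal) : ENNReal) := by
      rw [show EMetric.ball (0:ℂ) ((2⁻¹ : NNReal) : ENNReal) = Metric.eball 0 ((2⁻¹ : NNReal) : ENNReal) from rfl, Metric.emetric_ball_nnreal]
      exact hy
    have hsum := hps.hasSum hy'
    have hterm : (fun n => (cauchyPowerSeries f 0 ((2⁻¹ : NNReal) : ℝ)) n fun _ => y)
        = fun _ => (0:ℂ) := by
      funext n
      rw [FormalMultilinearSeries.apply_eq_pow_smul_coeff]
      have : (cauchyPowerSeries f 0 ((2⁻¹ : NNReal) : ℝ)).coeff n = 0 :=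
        coeff_zero hf hf2 hT n
      rw [this, smul_zero]
    rw [hterm] at hsum
    have hfy : f (0 + y) = 0 := hsum.unique hasSum_zero
    simpa using hfy
  have hev : f =ᶠ[nhds (0:ℂ)] 0 := by
    apply Filter.eventuallyEq_of_mem (ball_mem_nhds (0:ℂ) (by norm_num : (0:ℝ) < 2⁻¹))
    intro y hy
    have : ((2⁻¹ : NNReal) : ℝ) = (2⁻¹ : ℝ) := by norm_num
    exact hzero y (by rw [this]; exact hy)
  have hEq := (hf.analyticOnNhd isOpen_ball).eqOn_zero_of_preconnected_of_eventuallyEq_zero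
    (convex_ball (0:ℂ) 1).isPreconnected (mem_ball_self one_pos) hev
  intro z hz
  exact hEq hz
end
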